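/- Suppose functions V, H, K of λ satisfy VH' + HV' = −KH (the third equation of system (5.4)), and λ(μ) satisfies dλ/dμ = V(λ(μ)) with K(λ(μ)) = −tan(μ). Then the quantity H(λ(μ))·V(λ(μ))·cos(μ) is constant in μ. -/

import Mathlib

/-- First integral (5.8): if `V H' + H V' = -K H` and `λ' (μ) = V(λ(μ))` with
`K(λ(μ)) = -tan μ` on an interval where `cos μ ≠ 0`, then `H(λ(μ)) V(λ(μ)) cos μ`
is constant in `μ`. -/
theorem stmt12 (V H K lam : ℝ → ℝ) (a b : ℝ)
    (hV : Differentiable ℝ V) (hH : Differentiable ℝ H)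
    (heq : ∀ x : ℝ, V x * deriv H x + H x * deriv V x = -(K x * H x))
    (hlam : ∀ μ ∈ Set.Ioo a b, HasDerivAt lam (V (lam μ)) μ)
    (hK : ∀ μ ∈ Set.Ioo a b, K (lam μ) = -Real.tan μ)
    (hcos : ∀ μ ∈ Set.Ioo a b, Real.cos μ ≠ 0) :
    ∃ m : ℝ, ∀ μ ∈ Set.Ioo a b, H (lam μ) * V (lam μ) * Real.cos μ = m := by
  set f : ℝ → ℝ := fun μ => H (lam μ) * V (lam μ) * Real.cos μ with hf
  have hderiv : ∀ μ ∈ Set.Ioo a b, HasDerivAt f 0 μ := by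
    intro μ hμ
    have hL := hlam μ hμ
    have hHc : HasDerivAt (fun t => H (lam t)) (deriv H (lam μ) * V (lam μ)) μ :=
      (hH (lam μ)).hasDerivAt.comp μ hL
    have hVc : HasDerivAt (fun t => V (lam t)) (deriv V (lam μ) * V (lam μ)) μ :=
      (hV (lam μ)).hasDerivAt.comp μ hL
    have hcosd : HasDerivAt Real.cos (-Real.sin μ) μ := Real.hasDerivAt_cos μ
    have := ((hHc.mul hVc).mul hcosd)
    refine this.congr_deriv (Eq.symm ?_)
    have h1 := heq (lam μ)
    have h2 := hK μ hμ
    have hc := hcos μ hμ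
    have htan : Real.tan μ * Real.cos μ = Real.sin μ := by
      rw [Real.tan_eq_sin_div_cos]; field_simp
    have key : deriv H (lam μ) * V (lam μ) * V (lam μ) +
        H (lam μ) * (deriv V (lam μ) * V (lam μ)) =
        Real.tan μ * H (lam μ) * V (lam μ) := by
      have : (V (lam μ) * deriv H (lam μ) + H (lam μ) * deriv V (lam μ)) * V (lam μ)
          = -(K (lam μ) * H (lam μ)) * V (lam μ) := by rw [h1]
      rw [h2] at this; ring_nf at this ⊢; linarith
    rw [key]
    simp only [Pi.mul_apply]
    linear_combination (-(H (lam μ) * V (lam μ))) * htan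
  rcases Set.eq_empty_or_nonempty (Set.Ioo a b) with he | ⟨c, hc⟩
  · exact ⟨0, by simp [he]⟩
  · refine ⟨f c, fun μ hμ => ?_⟩
    have : ‖f μ - f c‖ ≤ 0 * ‖μ - c‖ := by
      apply Convex.norm_image_sub_le_of_norm_deriv_le
        (fun x hx => (hderiv x hx).differentiableAt)
        (fun x hx => by rw [(hderiv x hx).deriv]; simp) (convex_Ioo a b) hc hμ
    exact sub_eq_zero.mp (norm_eq_zero.mp (le_antisymm (by simpa using this) (norm_nonneg _)))
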